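/- Let A be a noetherian ring complete with respect to an ideal I, S a profinite set, and f ∈ C(S,A) a continuous function such that f(s) is a non-zero-divisor in A for every s ∈ S. Suppose there exists k ≥ 0 such that I^{m+k} ∩ (f(s)) ⊆ I^m·f(s) for all m ≥ 0 and all s ∈ S. Then the principal ideal (f) ⊆ C(S,A) is closed in the I-adic topology on C(S,A). -/

import Mathlib

/-- Let `A` be a noetherian ring complete with respect to an ideal `I` (with the `I`-adic
topology), `S` a profinite set, and `f ∈ C(S,A)` a continuous function such that every value
`f(s)` is a non-zero-divisor of `A`.  Suppose there is a uniform Artin–Rees constant `k`,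
i.e. `I^{m+k} ∩ (f(s)) ⊆ I^m·f(s)` for all `m ≥ 0` and all `s ∈ S`.  Then the principal
ideal `(f) ⊆ C(S,A)` is closed for the `I`-adic topology on `C(S,A)` (i.e. it equals the
intersection of the `(f) + I^m·C(S,A)`). -/
theorem span_closed_of_uniform_artinRees
    (A : Type*) [CommRing A] [IsNoetherianRing A] [TopologicalSpace A] [IsTopologicalRing A]
    (I : Ideal A) (hA : IsAdic I) [IsAdicComplete I A]
    (S : Type*) [TopologicalSpace S] [CompactSpace S] [T2Space S] [TotallyDisconnectedSpace S]
    (f : C(S, A)) (hf : ∀ s, f s ∈ nonZeroDivisors A)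
    (k : ℕ) (hk : ∀ (m : ℕ) (s : S),
      I ^ (m + k) ⊓ Ideal.span {f s} ≤ I ^ m * Ideal.span {f s}) :
    ∀ g : C(S, A),
      (∀ m : ℕ, g ∈ Ideal.span {f} ⊔ Ideal.map (algebraMap A C(S, A)) (I ^ m)) →
      g ∈ Ideal.span {f} := by
  intro g hg
  have hsmul : ∀ n : ℕ, (I ^ n • ⊤ : Submodule A A) = I ^ n := fun n => by
    rw [Ideal.smul_eq_mul, Ideal.mul_top]
  -- decompose g each stage
  choose p hp q hq hpq using fun m => Submodule.mem_sup.mp (hg m)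
  choose h hh using fun m => Ideal.mem_span_singleton'.mp (hp m)
  -- evaluation ring hom
  let ev : S → (C(S, A) →+* A) := fun s =>
    (Pi.evalRingHom (fun _ => A) s).comp ContinuousMap.coeFnRingHom
  have hqs : ∀ (m : ℕ) (s : S), q m s ∈ I ^ m := by
    intro m s
    have h1 : Ideal.map (ev s) (Ideal.map (algebraMap A C(S, A)) (I ^ m)) ≤ I ^ m := by
      rw [Ideal.map_map]
      have he : (ev s).comp (algebraMap A C(S, A)) = RingHom.id A := by ext a; rfl
      rw [he, Ideal.map_id]
    exact h1 (Ideal.mem_map_of_mem _ (hq m))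
  -- pointwise decomposition
  have e : ∀ (m : ℕ) (s : S), h m s * f s + q m s = g s := by
    intro m s
    have := congrArg (fun φ : C(S, A) => φ s) (hpq m)
    simp only [ContinuousMap.add_apply] at this
    rw [← this, ← hh m]
    simp
  -- Cauchy estimate
  have key : ∀ (s : S) (m n : ℕ), m ≤ n → h (m + k) s - h (n + k) s ∈ I ^ m := by
    intro s m n hmn
    have hfd : (h (m + k) s - h (n + k) s) * f s = q (n + k) s - q (m + k) s := by
      have e1 := e (m + k) s
      have e2 := e (n + k) s
      ring_nf
      ring_nf at e1 e2
      linear_combination e1 - e2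
    have hmem : (h (m + k) s - h (n + k) s) * f s ∈ I ^ (m + k) ⊓ Ideal.span {f s} := by
      constructor
      · rw [hfd]
        exact sub_mem (Ideal.pow_le_pow_right (by omega) (hqs (n + k) s)) (hqs (m + k) s)
      · exact Ideal.mem_span_singleton'.mpr ⟨_, rfl⟩
    obtain ⟨z, hz, hzf⟩ := Ideal.mem_mul_span_singleton.mp (hk m s hmem)
    rwa [← (mul_cancel_right_mem_nonZeroDivisors (hf s)).mp hzf]
  -- pointwise limit
  have hex : ∀ s : S, ∃ L : A, ∀ n : ℕ,
      h (n + k) s ≡ L [SMOD (I ^ n • ⊤ : Submodule A A)] := by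
    intro s
    apply IsPrecomplete.prec (IsAdicComplete.toIsPrecomplete (I := I) (M := A))
    intro m n hmn
    rw [SModEq.sub_mem, hsmul]
    exact key s m n hmn
  choose L hL using hex
  have hLm : ∀ (s : S) (n : ℕ), h (n + k) s - L s ∈ I ^ n := fun s n => by
    have := hL s n
    rwa [SModEq.sub_mem, hsmul] at this
  -- continuity of the limit
  obtain ⟨hopen, hbasis⟩ := isAdic_iff.mp hA
  have hLcont : Continuous L := by
    rw [continuous_iff_continuousAt]
    intro s0
    rw [ContinuousAt, ← tendsto_sub_nhds_zero_iff, Filter.tendsto_def]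
    intro V hV
    obtain ⟨n, hn⟩ := hbasis V hV
    have hW : IsOpen {s : S | h (n + k) s - h (n + k) s0 ∈ I ^ n} := by
      have hc : Continuous fun s => h (n + k) s - h (n + k) s0 :=
        (h (n + k)).continuous.sub continuous_const
      exact (hopen n).preimage hc
    have hs0 : s0 ∈ {s : S | h (n + k) s - h (n + k) s0 ∈ I ^ n} := by
      simp only [Set.mem_setOf_eq, sub_self]
      exact (I ^ n).zero_mem
    apply Filter.mem_of_superset (hW.mem_nhds hs0)
    intro s hs
    apply hn
    show L s - L s0 ∈ (I ^ n : Ideal A)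
    have : L s - L s0 = -(h (n + k) s - L s) + (h (n + k) s - h (n + k) s0)
        + (h (n + k) s0 - L s0) := by ring
    rw [this]
    exact add_mem (add_mem (neg_mem (hLm s n)) hs) (hLm s0 n)
  set H : C(S, A) := ⟨L, hLcont⟩ with hH
  have hgH : H * f = g := by
    ext s
    have h0 : g s - L s * f s = 0 := by
      apply IsHausdorff.haus (IsAdicComplete.toIsHausdorff (R := A) (I := I) (M := A))
      intro n
      rw [SModEq.zero, hsmul]
      have : g s - L s * f s = q (n + k) s + (h (n + k) s - L s) * f s := by
        have e1 := e (n + k) s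
        linear_combination -e1
      rw [this]
      exact add_mem (Ideal.pow_le_pow_right (by omega) (hqs (n + k) s))
        (Ideal.mul_mem_right _ _ (hLm s n))
    have : (H * f) s = L s * f s := by simp [hH]
    rw [this]
    linear_combination -h0
  exact Ideal.mem_span_singleton'.mpr ⟨H, hgH⟩
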